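/- Let r > 1 be real and define φ_r(z) = (r² − 1)z/(z² + r²). Then φ_r is a holomorphic bijection from the half-disc D_r = {z ∈ ℂ : Im z > 0 and |z| < r} onto the upper half-plane ℍ, and moreover φ_r(0) = 0 and φ_r(i) = i. -/

import Mathlib

open Complex

lemma key6 (r : ℝ) (z : ℂ) (hd : z ^ 2 + (r:ℂ) ^ 2 ≠ 0) :
    (((r:ℂ) ^ 2 - 1) * z / (z ^ 2 + (r:ℂ) ^ 2)).im * Complex.normSq (z ^ 2 + (r:ℂ) ^ 2)
      = (r ^ 2 - 1) * (r ^ 2 - Complex.normSq z) * z.im := by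
  have h0 : Complex.normSq (z ^ 2 + (r:ℂ) ^ 2) ≠ 0 := by simpa using hd
  rw [Complex.div_im]
  field_simp
  simp [Complex.normSq_apply, Complex.mul_im, Complex.mul_re, Complex.add_im, Complex.add_re,
    pow_two]
  ring

lemma den6 (r : ℝ) (hr : 0 < r) (z : ℂ) (hz : ‖z‖ < r) :
    z ^ 2 + (r:ℂ) ^ 2 ≠ 0 := by
  intro h
  have h1 : z ^ 2 = -(r:ℂ) ^ 2 := by linear_combination h
  have h2 : ‖z‖ ^ 2 = r ^ 2 := by
    have := congrArg (‖·‖) h1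
    simpa [norm_pow, Complex.norm_real, Real.norm_eq_abs, abs_of_pos hr] using this
  nlinarith [norm_nonneg z]

theorem stmt_6 (r : ℝ) (hr : 1 < r) (φ : ℂ → ℂ)
    (hφ : ∀ z : ℂ, φ z = ((r : ℂ) ^ 2 - 1) * z / (z ^ 2 + (r : ℂ) ^ 2)) :
    DifferentiableOn ℂ φ {z : ℂ | 0 < z.im ∧ ‖z‖ < r} ∧
    Set.BijOn φ {z : ℂ | 0 < z.im ∧ ‖z‖ < r} {z : ℂ | 0 < z.im} ∧
    φ 0 = 0 ∧ φ Complex.I = Complex.I := by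
  have hr0 : (0:ℝ) < r := lt_trans one_pos hr
  have hr1 : (0:ℝ) < r ^ 2 - 1 := by nlinarith
  have hrC : ((r:ℂ) ^ 2 - 1) ≠ 0 := by
    have h' : ((r:ℂ) ^ 2 - 1) = (((r ^ 2 - 1 : ℝ)) : ℂ) := by push_cast; ring
    rw [h']
    exact_mod_cast ne_of_gt hr1
  -- mapsTo : for z in the half disc, Im (φ z) > 0
  have hmaps : ∀ z : ℂ, 0 < z.im → ‖z‖ < r → 0 < (φ z).im := by
    intro z h1 h2
    have hd := den6 r hr0 z h2
    have hk := key6 r z hd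
    have hns : 0 < Complex.normSq (z ^ 2 + (r:ℂ) ^ 2) := by
      simpa [Complex.normSq_pos] using hd
    have hlt : Complex.normSq z < r ^ 2 := by
      have := Complex.sq_norm z
      nlinarith [norm_nonneg z]
    have hx : 0 < (φ z).im * Complex.normSq (z ^ 2 + (r:ℂ) ^ 2) := by
      rw [hφ z, hk]
      exact mul_pos (mul_pos hr1 (by linarith)) h1
    exact (mul_pos_iff_of_pos_right hns).mp hx
  refine ⟨?_, ⟨?_, ?_, ?_⟩, ?_, ?_⟩
  · -- differentiability
    have hφ' : φ = fun z => ((r : ℂ) ^ 2 - 1) * z / (z ^ 2 + (r : ℂ) ^ 2) := funext hφ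
    rw [hφ']
    refine DifferentiableOn.div (by fun_prop) (by fun_prop) ?_
    intro z hz
    exact den6 r hr0 z hz.2
  · -- mapsTo
    intro z hz
    exact hmaps z hz.1 hz.2
  · -- injective
    intro z hz w hw h
    have hdz := den6 r hr0 z hz.2
    have hdw := den6 r hr0 w hw.2
    rw [hφ z, hφ w, div_eq_div_iff hdz hdw] at h
    have h2 : (z - w) * ((r:ℂ) ^ 2 - z * w) = 0 := by
      have h5 : ((r:ℂ) ^ 2 - 1) * (z * (w ^ 2 + (r:ℂ)^2))
          = ((r:ℂ) ^ 2 - 1) * (w * (z ^ 2 + (r:ℂ)^2)) := by linear_combination h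
      have h6 := mul_left_cancel₀ hrC h5
      linear_combination h6
    rcases mul_eq_zero.mp h2 with h3 | h3
    · linear_combination h3
    · exfalso
      have h4 : z * w = (r:ℂ) ^ 2 := by linear_combination -h3
      have h7 := congrArg (‖·‖) h4
      rw [norm_mul] at h7
      simp only [norm_pow, Complex.norm_real, Real.norm_eq_abs, abs_of_pos hr0] at h7
      nlinarith [norm_nonneg z, norm_nonneg w, hz.2, hw.2]
  · -- surjective
    intro w hw
    have hwim : 0 < w.im := hw
    have hw0 : w ≠ 0 := by
      intro h; rw [h] at hwim; simp at hwim
    obtain ⟨s, hs⟩ := IsAlgClosed.exists_pow_nat_eq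
      (((r:ℂ)^2-1)^2 - 4*(r:ℂ)^2*w^2) (n := 2) zero_lt_two
    set z₁ : ℂ := (((r:ℂ)^2 - 1) + s) / (2 * w) with hz₁
    set z₂ : ℂ := (((r:ℂ)^2 - 1) - s) / (2 * w) with hz₂
    have h2w : (2:ℂ) * w ≠ 0 := by simp [hw0]
    -- both are roots of w z² − (r²−1) z + r² w = 0
    have gen : ∀ A : ℂ, A ^ 2 = 2*((r:ℂ)^2-1)*A - 4*(r:ℂ)^2*w^2 →
        w * (A/(2*w)) ^ 2 + (r:ℂ)^2 * w = ((r:ℂ)^2-1) * (A/(2*w)) := by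
      intro A hA
      have e : A = (A/(2*w)) * (2*w) := (div_mul_cancel₀ _ h2w).symm
      set d := A/(2*w) with hd
      rw [e] at hA
      apply mul_left_cancel₀ (show (4:ℂ)*w ≠ 0 by simp [hw0])
      linear_combination hA
    have hroot : ∀ z : ℂ, z = z₁ ∨ z = z₂ →
        w * z ^ 2 + (r:ℂ) ^ 2 * w = ((r:ℂ) ^ 2 - 1) * z := by
      rintro z (rfl | rfl)
      · exact gen _ (by linear_combination hs)
      · exact gen _ (by linear_combination hs)
    have hprod : z₁ * z₂ = (r:ℂ) ^ 2 := by
      rw [hz₁, hz₂, div_mul_div_comm]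
      rw [div_eq_iff (by simp [hw0] : (2*w)*(2*w) ≠ (0:ℂ))]
      linear_combination -hs
    -- generic facts about any root z
    have hfact : ∀ z : ℂ, w * z ^ 2 + (r:ℂ) ^ 2 * w = ((r:ℂ) ^ 2 - 1) * z →
        (z ^ 2 + (r:ℂ) ^ 2 ≠ 0 ∧ φ z = w ∧
          0 < (r ^ 2 - Complex.normSq z) * z.im) := by
      intro z hz
      have hd : z ^ 2 + (r:ℂ) ^ 2 ≠ 0 := by
        intro h
        have hz0 : ((r:ℂ) ^ 2 - 1) * z = 0 := by
          rw [← hz]; linear_combination w * h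
        rcases mul_eq_zero.mp hz0 with h1 | h1
        · exact hrC h1
        · rw [h1] at h
          have hrr : ((r:ℂ)) ^ 2 = 0 := by simpa using h
          have : (r:ℂ) = 0 := by
            exact pow_eq_zero_iff (by norm_num) |>.mp hrr
          simp at this
          linarith
      have hφz : φ z = w := by
        rw [hφ z, div_eq_iff hd, ← hz]; ring
      refine ⟨hd, hφz, ?_⟩
      have hk := key6 r z hd
      have hns : 0 < Complex.normSq (z ^ 2 + (r:ℂ) ^ 2) := by
        simpa [Complex.normSq_pos] using hd
      rw [← hφ z, hφz] at hk
      have hx : 0 < (r ^ 2 - 1) * ((r ^ 2 - Complex.normSq z) * z.im) := by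
        rw [show (r ^ 2 - 1) * ((r ^ 2 - Complex.normSq z) * z.im)
            = (r ^ 2 - 1) * (r ^ 2 - Complex.normSq z) * z.im by ring, ← hk]
        exact mul_pos hwim hns
      exact (mul_pos_iff_of_pos_left hr1).mp hx
    obtain ⟨hd1, hφ1, hsg1⟩ := hfact z₁ (hroot z₁ (Or.inl rfl))
    obtain ⟨hd2, hφ2, hsg2⟩ := hfact z₂ (hroot z₂ (Or.inr rfl))
    -- one of z₁ z₂ has normSq < r²
    have hprodn : Complex.normSq z₁ * Complex.normSq z₂ = r ^ 2 * r ^ 2 := by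
      have := congrArg Complex.normSq hprod
      rw [map_mul] at this
      rw [this]
      rw [show ((r:ℂ)^2 : ℂ) = (((r^2 : ℝ)) : ℂ) by push_cast; ring]
      rw [Complex.normSq_ofReal]
    have hone : Complex.normSq z₁ < r ^ 2 ∨ Complex.normSq z₂ < r ^ 2 := by
      by_contra h
      push_neg at h
      have e1 : Complex.normSq z₁ = r ^ 2 := by
        nlinarith [mul_nonneg (sub_nonneg.2 h.1) (sub_nonneg.2 h.2)]
      rw [e1] at hsg1
      simp at hsg1
    rcases hone with h | h
    · refine ⟨z₁, ⟨?_, ?_⟩, hφ1⟩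
      · nlinarith
      · have := Complex.sq_norm z₁
        nlinarith [norm_nonneg z₁]
    · refine ⟨z₂, ⟨?_, ?_⟩, hφ2⟩
      · nlinarith
      · have := Complex.sq_norm z₂
        nlinarith [norm_nonneg z₂]
  · rw [hφ]; simp
  · rw [hφ]
    rw [Complex.I_sq]
    rw [div_eq_iff (by intro h; exact hrC (by linear_combination h))]
    ring
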